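/- Let (ψ, ψ_2, …, ψ_K) be an orthonormal family of vectors in ℂ^d, let λ ∈ (0,1], and let p_2, …, p_K be nonnegative reals with ∑_k p_k = 1. Define ρ = λ·|ψ⟩⟨ψ| + (1−λ)·∑_{k=2}^K p_k·|ψ_k⟩⟨ψ_k|, and let σ be a d×d complex matrix whose operator norm satisfies ‖σ‖ ≤ 1. Then for every n ≥ 1: |Tr[ρ^n σ]/λ^n − ⟨ψ, σψ⟩| ≤ Q_n, where Q_n := ((1−λ)/λ)^n · ∑_{k=2}^K p_k^n. -/

import Mathlib

open Matrix BigOperators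

lemma vvmul {d : ℕ} (u v w x : Fin d → ℂ) :
    vecMulVec u v * vecMulVec w x = (v ⬝ᵥ w) • vecMulVec u x := by
  ext i j
  simp only [Matrix.mul_apply, vecMulVec_apply, Matrix.smul_apply, dotProduct,
    Finset.sum_mul, smul_eq_mul]
  congr 1; ext k; ring

lemma trvv {d : ℕ} (u v : Fin d → ℂ) (σ : Matrix (Fin d) (Fin d) ℂ) :
    (vecMulVec u v * σ).trace = v ⬝ᵥ σ.mulVec u := by
  simp [Matrix.trace, Matrix.mul_apply, vecMulVec_apply, dotProduct, Matrix.mulVec,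
    Finset.mul_sum]
  rw [Finset.sum_comm]
  congr 1; ext j; congr 1; ext i; ring

lemma innerbound {d : ℕ} (v : Fin d → ℂ) (hv : star v ⬝ᵥ v = 1)
    (σ : Matrix (Fin d) (Fin d) ℂ)
    (hσ : ‖Matrix.toEuclideanCLM (𝕜 := ℂ) σ‖ ≤ 1) :
    ‖star v ⬝ᵥ σ.mulVec v‖ ≤ 1 := by
  set v' : EuclideanSpace ℂ (Fin d) := WithLp.toLp 2 v
  have hnorm : ‖v'‖ = 1 := by
    have h1 : (inner ℂ v' v' : ℂ) = 1 := by
      rw [EuclideanSpace.inner_toLp_toLp, dotProduct_comm]; exact hv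
    have h2 := inner_self_eq_norm_sq_to_K (𝕜 := ℂ) v'
    rw [h1] at h2
    have h3 : (1:ℝ) = ‖v'‖^2 := by exact_mod_cast congrArg Complex.re h2
    nlinarith [norm_nonneg v']
  have key : star v ⬝ᵥ σ.mulVec v = inner ℂ v' (Matrix.toEuclideanCLM (𝕜 := ℂ) σ v') := by
    rw [show Matrix.toEuclideanCLM (𝕜 := ℂ) σ v' =
        WithLp.toLp 2 (σ.mulVec v) from by
      rw [Matrix.toEuclideanCLM_toLp],
      EuclideanSpace.inner_toLp_toLp, dotProduct_comm]
  rw [key]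
  calc ‖(inner ℂ v' (Matrix.toEuclideanCLM (𝕜 := ℂ) σ v') : ℂ)‖
      ≤ ‖v'‖ * ‖Matrix.toEuclideanCLM (𝕜 := ℂ) σ v'‖ := norm_inner_le_norm _ _
    _ ≤ ‖v'‖ * (‖Matrix.toEuclideanCLM (𝕜 := ℂ) σ‖ * ‖v'‖) := by
        gcongr; exact (Matrix.toEuclideanCLM (𝕜 := ℂ) σ).le_opNorm v'
    _ ≤ 1 := by rw [hnorm]; nlinarith

/-- Method B error bound, paper's Theorem 2: for the noisy state
`ρ = λ|ψ⟩⟨ψ| + (1−λ)∑_k p_k |ψ_k⟩⟨ψ_k|` with `(ψ, ψ_2, …, ψ_K)` orthonormal,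
`λ ∈ (0,1]`, `p_k ≥ 0`, `∑_k p_k = 1`, and `σ` with operator norm `‖σ‖ ≤ 1`:
`|Tr[ρ^n σ]/λ^n − ⟨ψ, σψ⟩| ≤ Q_n`, where `Q_n = ((1−λ)/λ)^n ∑_k p_k^n`. -/
theorem methodB_error_bound {d K : ℕ}
    (ψ : Fin d → ℂ) (ψe : Fin K → Fin d → ℂ)
    (hψ : star ψ ⬝ᵥ ψ = 1)
    (horth : ∀ k, star ψ ⬝ᵥ ψe k = 0)
    (he : ∀ k l, star (ψe k) ⬝ᵥ ψe l = if k = l then 1 else 0)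
    (lam : ℝ) (hlam : lam ∈ Set.Ioc (0 : ℝ) 1)
    (p : Fin K → ℝ) (hp : ∀ k, 0 ≤ p k) (hsum : ∑ k, p k = 1)
    (σ : Matrix (Fin d) (Fin d) ℂ)
    (hσ : ‖Matrix.toEuclideanCLM (𝕜 := ℂ) σ‖ ≤ 1)
    (n : ℕ) (hn : 1 ≤ n) :
    let ρ : Matrix (Fin d) (Fin d) ℂ :=
      (lam : ℂ) • vecMulVec ψ (star ψ) +
        ((1 : ℂ) - (lam : ℂ)) • ∑ k, (p k : ℂ) • vecMulVec (ψe k) (star (ψe k))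
    ‖(ρ ^ n * σ).trace / (lam : ℂ) ^ n - star ψ ⬝ᵥ σ.mulVec ψ‖
      ≤ ((1 - lam) / lam) ^ n * ∑ k, p k ^ n := by
  intro ρ
  obtain ⟨hlam0, hlam1⟩ := hlam
  set A : Matrix (Fin d) (Fin d) ℂ := vecMulVec ψ (star ψ) with hA
  set B : Fin K → Matrix (Fin d) (Fin d) ℂ := fun k => vecMulVec (ψe k) (star (ψe k)) with hB
  have horth' : ∀ k, star (ψe k) ⬝ᵥ ψ = 0 := by
    intro k
    have := congrArg star (horth k)
    rwa [star_dotProduct, star_star, star_zero] at this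
  have hAA : A * A = A := by rw [hA, vvmul, hψ, one_smul]
  have hAB : ∀ k, A * B k = 0 := by
    intro k; rw [hA, hB, vvmul, horth k, zero_smul]
  have hBA : ∀ k, B k * A = 0 := by
    intro k; rw [hA, hB, vvmul, horth' k, zero_smul]
  have hBB : ∀ k l, B k * B l = if k = l then B k else 0 := by
    intro k l
    rw [hB, vvmul, he k l]
    split <;> rename_i h
    · subst h; rw [one_smul]
    · rw [zero_smul]
  -- powers of ρ
  have hpow : ∀ m : ℕ, 1 ≤ m →
      ρ ^ m = ((lam : ℂ) ^ m) • A +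
        (((1 : ℂ) - lam) ^ m) • ∑ k, ((p k : ℂ) ^ m) • B k := by
    intro m hm
    induction m with
    | zero => omega
    | succ m ih =>
      rcases Nat.eq_or_lt_of_le hm with h1 | h1
      · simp only [← h1, pow_one]; rfl
      · have hm1 : 1 ≤ m := by omega
        rw [pow_succ, ih hm1]
        show _ * ((lam : ℂ) • A + ((1:ℂ) - lam) • ∑ k, (p k : ℂ) • B k) = _
        rw [mul_add, add_mul, add_mul]
        rw [Matrix.mul_smul, Matrix.smul_mul, Matrix.mul_smul, Matrix.smul_mul,
          Matrix.mul_smul, Matrix.smul_mul, Matrix.mul_smul, Matrix.smul_mul]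
        rw [hAA]
        have h2 : A * ∑ k, (p k : ℂ) • B k = 0 := by
          rw [Finset.mul_sum]
          simp [Matrix.mul_smul, hAB]
        have h3 : (∑ k, ((p k : ℂ) ^ m) • B k) * A = 0 := by
          rw [Finset.sum_mul]
          simp [Matrix.smul_mul, hBA]
        have h4 : (∑ k, ((p k : ℂ) ^ m) • B k) * ∑ l, (p l : ℂ) • B l
            = ∑ k, ((p k : ℂ) ^ (m+1)) • B k := by
          rw [Finset.sum_mul]
          congr 1; ext k
          rw [Finset.mul_sum]
          rw [Finset.sum_eq_single k]
          · rw [Matrix.smul_mul, Matrix.mul_smul, hBB, if_pos rfl, smul_smul, pow_succ]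
          · intro l _ hl
            rw [Matrix.smul_mul, Matrix.mul_smul, hBB, if_neg (Ne.symm hl), smul_zero, smul_zero]
          · intro h; exact absurd (Finset.mem_univ k) h
        rw [h2, h3, h4]
        rw [smul_zero, smul_zero, smul_zero, smul_zero, add_zero, zero_add]
        rw [smul_smul, smul_smul, ← pow_succ', ← pow_succ']
  -- trace computation
  have htr : (ρ ^ n * σ).trace
      = (lam : ℂ) ^ n * (star ψ ⬝ᵥ σ.mulVec ψ)
        + ((1:ℂ) - lam) ^ n * ∑ k, ((p k : ℂ) ^ n) * (star (ψe k) ⬝ᵥ σ.mulVec (ψe k)) := by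
    rw [hpow n hn, Matrix.add_mul, Matrix.trace_add, Matrix.smul_mul, Matrix.smul_mul,
      Matrix.trace_smul, Matrix.trace_smul, hA, trvv]
    congr 1
    congr 1
    rw [Finset.sum_mul, Matrix.trace_sum]
    refine Finset.sum_congr rfl fun k _ => ?_
    simp only [hB]
    rw [Matrix.smul_mul, Matrix.trace_smul, trvv, smul_eq_mul]
  -- simplify the difference
  have hlamne : (lam : ℂ) ^ n ≠ 0 := pow_ne_zero n (by exact_mod_cast hlam0.ne')
  have hdiff : (ρ ^ n * σ).trace / (lam : ℂ) ^ n - star ψ ⬝ᵥ σ.mulVec ψ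
      = (((1:ℂ) - lam) / lam) ^ n * ∑ k, ((p k : ℂ) ^ n) * (star (ψe k) ⬝ᵥ σ.mulVec (ψe k)) := by
    rw [htr, div_pow]
    field_simp
    ring
  rw [hdiff, norm_mul]
  have h1lam : (0:ℝ) ≤ 1 - lam := by linarith
  have habs1 : ‖(((1:ℂ) - lam) / lam) ^ n‖ = ((1 - lam) / lam) ^ n := by
    rw [norm_pow, norm_div]
    rw [show (1:ℂ) - lam = ((1 - lam : ℝ) : ℂ) by push_cast; ring]
    rw [Complex.norm_real, Complex.norm_real, Real.norm_eq_abs, Real.norm_eq_abs, abs_of_nonneg h1lam,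
      abs_of_nonneg hlam0.le]
  rw [habs1]
  have hQ : (0:ℝ) ≤ ((1 - lam) / lam) ^ n :=
    pow_nonneg (div_nonneg h1lam hlam0.le) n
  refine mul_le_mul_of_nonneg_left ?_ hQ
  refine le_trans (norm_sum_le _ _) (Finset.sum_le_sum fun k _ => ?_)
  calc ‖((p k : ℂ) ^ n) * (star (ψe k) ⬝ᵥ σ.mulVec (ψe k))‖
      = (p k) ^ n * ‖star (ψe k) ⬝ᵥ σ.mulVec (ψe k)‖ := by
        rw [norm_mul, norm_pow, Complex.norm_real, Real.norm_eq_abs, abs_of_nonneg (hp k)]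
    _ ≤ (p k) ^ n * 1 := by
        have := innerbound (ψe k) (by rw [he k k, if_pos rfl]) σ hσ
        have hpk : (0:ℝ) ≤ (p k)^n := pow_nonneg (hp k) n
        nlinarith
    _ = (p k) ^ n := mul_one _
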